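/- arXiv:1501.07646 — 3 statements merged into one kernel-verified Lean document; each statement's English description precedes it below -/
import Mathlib

section
/- For any nonzero vector b ∈ ℂ^N, the signal lengths satisfy l(b) + l(F b) ≥ N + 1, where F is the centered discrete Fourier transform and l(a) = max{i - j : i, j ∈ supp(a)} + 1 counts via support indices in I_N. -/
open scoped Real BigOperators

/-- The index set `I_N = {-M+1, ..., -M+N}` with `M = ⌊(N+1)/2⌋`. -/
noncomputable def Iset (N : ℕ) : Finset ℤ :=
  Finset.Icc (1 - (((N + 1) / 2 : ℕ) : ℤ)) ((N : ℤ) - (((N + 1) / 2 : ℕ) : ℤ))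

/-- The centered discrete Fourier transform. -/
noncomputable def dft (N : ℕ) (u : ℤ → ℂ) (l : ℤ) : ℂ :=
  (Real.sqrt N : ℂ)⁻¹ *
    ∑ k ∈ Iset N, Complex.exp (-2 * Real.pi * Complex.I * k * l / N) * u k

open Classical in
/-- The support of a vector: indices in `I_N` where it is nonzero. -/
noncomputable def supp (N : ℕ) (u : ℤ → ℂ) : Finset ℤ :=
  (Iset N).filter (fun k => u k ≠ 0)

/-- The signal length `L(b) = max{i - j : i, j ∈ supp b} + 1`. -/
noncomputable def len (N : ℕ) (u : ℤ → ℂ) : ℕ :=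
  ((supp N u ×ˢ supp N u).sup fun p => (p.1 - p.2).toNat) + 1

private lemma pair_sup_eq (S : Finset ℤ) (h : S.Nonempty) :
    ((S ×ˢ S).sup fun p => (p.1 - p.2).toNat) = (S.max' h - S.min' h).toNat := by
  apply le_antisymm
  · apply Finset.sup_le
    intro p hp
    rw [Finset.mem_product] at hp
    have h1 := S.le_max' p.1 hp.1
    have h2 := S.min'_le p.2 hp.2
    omega
  · exact Finset.le_sup (f := fun p : ℤ × ℤ => (p.1 - p.2).toNat)
      (b := (S.max' h, S.min' h))
      (Finset.mem_product.2 ⟨S.max'_mem h, S.min'_mem h⟩)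

private lemma card_le_window (S : Finset ℤ) (h : S.Nonempty) :
    S.card ≤ (S.max' h - S.min' h).toNat + 1 := by
  have hsub : S ⊆ Finset.Icc (S.min' h) (S.max' h) := fun x hx =>
    Finset.mem_Icc.2 ⟨S.min'_le x hx, S.le_max' x hx⟩
  have hc := Finset.card_le_card hsub
  rw [Int.card_Icc] at hc
  have hm : S.min' h ≤ S.max' h := S.min'_le _ (S.max'_mem h)
  omega

private lemma exp_inj (N : ℕ) (hN : 1 ≤ N) :
    Set.InjOn (fun l : ℤ => Complex.exp (-2 * Real.pi * Complex.I * l / N)) (Iset N) := by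
  intro l hl l' hl' hexp
  simp only [Iset, Finset.coe_Icc, Set.mem_Icc] at hl hl'
  rw [Complex.exp_eq_exp_iff_exists_int] at hexp
  obtain ⟨n, hn⟩ := hexp
  have hNC : (N : ℂ) ≠ 0 := Nat.cast_ne_zero.2 (by omega)
  field_simp at hn
  have hpi : (Real.pi : ℂ) ≠ 0 := by exact_mod_cast Real.pi_ne_zero
  have hc : (-(2 * (Real.pi:ℂ) * Complex.I * (N:ℂ))) ≠ 0 := by
    simpa using mul_ne_zero (mul_ne_zero (mul_ne_zero (two_ne_zero (α := ℂ)) hpi)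
      Complex.I_ne_zero) hNC
  have key2 : (-(2 * (Real.pi:ℂ) * Complex.I * (N:ℂ))) * (l : ℂ) =
      (-(2 * (Real.pi:ℂ) * Complex.I * (N:ℂ))) * ((l' : ℂ) - (n : ℂ) * (N : ℂ)) := by
    linear_combination (2 * (Real.pi:ℂ) * Complex.I * (N:ℂ)) * hn
  have key : (l : ℂ) = (l' : ℂ) - (n : ℂ) * (N : ℂ) := mul_left_cancel₀ hc key2
  have keyZ : l = l' - n * N := by exact_mod_cast key
  have hNpos : (0:ℤ) ≤ (N:ℤ) := by positivity
  rcases lt_trichotomy n 0 with h | h | h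
  · have h1 : n * (N:ℤ) ≤ -1 * N := mul_le_mul_of_nonneg_right (by omega) hNpos
    have hNge : (1:ℤ) ≤ (N:ℤ) := by exact_mod_cast hN
    linarith [hl.1, hl.2, hl'.1, hl'.2]
  · rw [h, zero_mul, sub_zero] at keyZ; exact keyZ
  · have h1 : 1 * (N:ℤ) ≤ n * N := mul_le_mul_of_nonneg_right (by omega) hNpos
    have hNge : (1:ℤ) ≤ (N:ℤ) := by exact_mod_cast hN
    linarith [hl.1, hl.2, hl'.1, hl'.2]

theorem stmt4 (N : ℕ) (hN : 1 ≤ N) (b : ℤ → ℂ) (hb : ∃ k ∈ Iset N, b k ≠ 0) :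
    N + 1 ≤ len N b + len N (dft N b) := by
  classical
  obtain ⟨k0, hk0, hbk0⟩ := hb
  have hSb : (supp N b).Nonempty := ⟨k0, Finset.mem_filter.2 ⟨hk0, hbk0⟩⟩
  set S := supp N b with hS
  set m := S.min' hSb with hm
  set Mx := S.max' hSb with hMx
  have hmMx : m ≤ Mx := S.min'_le _ (S.max'_mem hSb)
  set D : ℕ := (Mx - m).toNat with hDdef
  have hmI : m ∈ Iset N := Finset.filter_subset _ _ (S.min'_mem hSb)
  have hMxI : Mx ∈ Iset N := Finset.filter_subset _ _ (S.max'_mem hSb)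
  have hD : D ≤ N - 1 := by
    simp only [Iset, Finset.mem_Icc] at hmI hMxI
    omega
  have hlenb : len N b = D + 1 := by
    unfold len
    rw [pair_sup_eq _ hSb]
  -- the polynomial
  set P : Polynomial ℂ := ∑ k ∈ S, Polynomial.C (b k) * Polynomial.X ^ (k - m).toNat with hP
  have hPdeg : P.natDegree ≤ D := by
    apply Polynomial.natDegree_sum_le_of_forall_le
    intro k hk
    refine (Polynomial.natDegree_C_mul_X_pow_le _ _).trans ?_
    have h1 := S.le_max' k hk
    have h2 := S.min'_le k hk
    omega
  have hbm : b m ≠ 0 := (Finset.mem_filter.1 (S.min'_mem hSb)).2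
  have hPne : P ≠ 0 := by
    intro h0
    have hc : P.coeff 0 = b m := by
      rw [hP, Polynomial.finset_sum_coeff]
      rw [Finset.sum_eq_single m]
      · simp
      · intro k hk hkm
        have h1 := S.min'_le k hk
        have hne : (k - m).toNat ≠ 0 := by omega
        simp [Polynomial.coeff_C_mul, Polynomial.coeff_X_pow, Ne.symm hne]
      · intro h; exact absurd (S.min'_mem hSb) h
    rw [h0] at hc
    simp at hc
    exact hbm hc.symm
  -- factorization of the dft
  have hsqrt : ((Real.sqrt N : ℝ) : ℂ) ≠ 0 := by
    have : (0:ℝ) < Real.sqrt N := Real.sqrt_pos.2 (by exact_mod_cast hN)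
    exact_mod_cast this.ne'
  have hfac : ∀ l : ℤ, dft N b l =
      (Real.sqrt N : ℂ)⁻¹ * (Complex.exp (-2 * Real.pi * Complex.I * m * l / N) *
        P.eval (Complex.exp (-2 * Real.pi * Complex.I * l / N))) := by
    intro l
    unfold dft
    congr 1
    have hsum : (∑ k ∈ Iset N, Complex.exp (-2 * Real.pi * Complex.I * k * l / N) * b k)
        = ∑ k ∈ S, Complex.exp (-2 * Real.pi * Complex.I * k * l / N) * b k := by
      refine (Finset.sum_subset (Finset.filter_subset _ _) ?_).symm
      intro k hk hks
      have hbk : b k = 0 := by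
        by_contra h
        exact hks (Finset.mem_filter.2 ⟨hk, h⟩)
      simp [hbk]
    rw [hsum, hP, Polynomial.eval_finset_sum, Finset.mul_sum]
    apply Finset.sum_congr rfl
    intro k hk
    have hkm : m ≤ k := S.min'_le k hk
    have hcast : (((k - m).toNat : ℕ) : ℂ) = (k : ℂ) - (m : ℂ) := by
      have h2 : ((k - m).toNat : ℤ) = k - m := Int.toNat_of_nonneg (by omega)
      rw [show (((k - m).toNat : ℕ) : ℂ) = (((k - m).toNat : ℤ) : ℂ) by push_cast; ring, h2]
      push_cast
      ring
    have hexp : Complex.exp (-2 * Real.pi * Complex.I * k * l / N) =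
        Complex.exp (-2 * Real.pi * Complex.I * m * l / N) *
          Complex.exp (-2 * Real.pi * Complex.I * l / N) ^ (k - m).toNat := by
      rw [← Complex.exp_nat_mul, ← Complex.exp_add]
      congr 1
      rw [hcast]
      ring
    simp only [Polynomial.eval_mul, Polynomial.eval_C, Polynomial.eval_pow, Polynomial.eval_X]
    rw [hexp]
    ring
  -- counting
  have hcardI : (Iset N).card = N := by
    rw [Iset, Int.card_Icc]
    omega
  set Z : Finset ℤ := (Iset N).filter (fun l => dft N b l = 0) with hZ
  have hsplit : Z.card + (supp N (dft N b)).card = N := by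
    have h := Finset.card_filter_add_card_filter_not
      (s := Iset N) (p := fun l => dft N b l = 0)
    rw [hcardI] at h
    have heq : supp N (dft N b) = (Iset N).filter (fun l => ¬ dft N b l = 0) := by
      simp [supp]
    rw [heq]
    exact h
  have hZcard : Z.card ≤ D := by
    have h1 : Z.card ≤ P.roots.toFinset.card := by
      refine Finset.card_le_card_of_injOn
        (fun l : ℤ => Complex.exp (-2 * Real.pi * Complex.I * l / N)) ?_ ?_
      · intro l hl
        rw [hZ, Finset.mem_coe, Finset.mem_filter] at hl
        rw [Finset.mem_coe, Multiset.mem_toFinset, Polynomial.mem_roots hPne]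
        have h0 := (hfac l).symm.trans hl.2
        rcases mul_eq_zero.1 h0 with h | h
        · exact absurd h (inv_ne_zero hsqrt)
        rcases mul_eq_zero.1 h with h | h
        · exact absurd h (Complex.exp_ne_zero _)
        exact h
      · exact (exp_inj N hN).mono (by
          intro x hx
          have : Z ⊆ Iset N := Finset.filter_subset _ _
          exact this hx)
    calc Z.card ≤ P.roots.toFinset.card := h1
      _ ≤ Multiset.card P.roots := Multiset.toFinset_card_le _
      _ ≤ P.natDegree := Polynomial.card_roots' P
      _ ≤ D := hPdeg
  have hSd : (supp N (dft N b)).Nonempty := Finset.card_pos.1 (by omega)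
  have hlend : (supp N (dft N b)).card ≤ len N (dft N b) := by
    unfold len
    rw [pair_sup_eq _ hSd]
    exact card_le_window _ hSd
  omega
end

section
/- Let N = 2M+1 with M ≥ 1. For each 1 ≤ m ≤ M-1 there exists, up to nonzero scalar multiple, a unique even vector a ∈ ℝ^N with signal length 2m+1 such that the signal length of its centered DFT equals N+1-(2m+1) = 2M-2m+1. -/
open scoped Real BigOperators

/-- A vector is even if `a(-k) = a(k)` for all `k ∈ I_N` (here `N` odd, `I_N = {-M,…,M}`). -/
def IsEvenVec (N : ℕ) (a : ℤ → ℝ) : Prop := ∀ k ∈ Iset N, a (-k) = a k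

namespace Stmt6

open Polynomial Complex Finset

lemma Iset_eq (M : ℕ) : Iset (2 * M + 1) = Finset.Icc (-(M:ℤ)) (M:ℤ) := by
  unfold Iset
  congr 1 <;> (push_cast [Nat.add_mul_div_left]; omega)

noncomputable def e (M : ℕ) (l : ℤ) : ℂ :=
  Complex.exp (((-2 * Real.pi * l / (2*M+1) : ℝ) : ℂ) * Complex.I)

lemma e_ne_zero (M : ℕ) (l : ℤ) : e M l ≠ 0 := Complex.exp_ne_zero _

lemma e_zpow (M : ℕ) (l k : ℤ) :
    Complex.exp (-2 * Real.pi * Complex.I * k * l / (2*M+1 : ℕ)) = e M l ^ k := by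
  rw [e, ← Complex.exp_int_mul]
  congr 1
  push_cast
  ring

lemma dft_eq_eval (M m : ℕ) (hm : m ≤ M) (u : ℤ → ℂ)
    (hu : ∀ k ∈ Iset (2*M+1), (m:ℤ) < |k| → u k = 0)
    (Q : ℂ[X]) (hQ : ∀ j : ℕ, j ≤ 2*m → Q.coeff j = u ((j:ℤ) - m))
    (hdeg : Q.natDegree ≤ 2*m) (l : ℤ) :
    dft (2*M+1) u l =
      (Real.sqrt (2*M+1) : ℂ)⁻¹ * (e M l ^ (-(m:ℤ)) * Q.eval (e M l)) := by
  rw [dft]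
  push_cast
  congr 1
  have h1 : ∑ k ∈ Iset (2*M+1), Complex.exp (-2 * Real.pi * Complex.I * k * l / (2*M+1:ℕ)) * u k
      = ∑ k ∈ Finset.Icc (-(m:ℤ)) m, e M l ^ k * u k := by
    rw [Iset_eq]
    rw [← Finset.sum_subset (Finset.Icc_subset_Icc
        (by exact_mod_cast neg_le_neg (show (m:ℤ) ≤ M by exact_mod_cast hm))
        (show (m:ℤ) ≤ M by exact_mod_cast hm))
      (fun k hk hk' => by
        have : u k = 0 := by
          apply hu k (by rw [Iset_eq]; exact hk)
          simp only [Finset.mem_Icc] at hk hk'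
          rcases abs_cases k with ⟨h,h'⟩|⟨h,h'⟩ <;> omega
        simp [this])]
    exact Finset.sum_congr rfl fun k _ => by rw [e_zpow]
  push_cast at h1
  rw [h1]
  have h2 : Q.eval (e M l) = ∑ j ∈ Finset.range (2*m+1), u ((j:ℤ) - m) * e M l ^ j := by
    rw [Polynomial.eval_eq_sum_range' (Nat.lt_succ_of_le hdeg)]
    exact Finset.sum_congr rfl fun j hj => by
      rw [hQ j (by simpa [Nat.lt_succ_iff] using hj)]
  rw [h2, Finset.mul_sum]
  refine Finset.sum_nbij' (fun k => (k + m).toNat) (fun j => (j:ℤ) - m) ?_ ?_ ?_ ?_ ?_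
  · intro k hk; simp only [Finset.mem_Icc] at hk; simp only [Finset.mem_range]; omega
  · intro j hj; simp only [Finset.mem_range] at hj; simp only [Finset.mem_Icc]; omega
  · intro k hk; simp only [Finset.mem_Icc] at hk; omega
  · intro j hj; simp only [Finset.mem_range] at hj; omega
  · intro k hk
    simp only [Finset.mem_Icc] at hk
    have hkt : ((k + (m:ℤ)).toNat : ℤ) = k + m := by omega
    have h3 : ((k + (m:ℤ)).toNat : ℤ) - m = k := by omega
    rw [← zpow_natCast (e M l) ((k + (m:ℤ)).toNat), hkt,
      show (k + (m:ℤ) - m) = k from by ring, mul_comm (u k),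
      ← mul_assoc, ← zpow_add₀ (e_ne_zero M l),
      show (-(m:ℤ) + (k + m)) = k from by ring, mul_comm]

/-- If `u` vanishes outside `[-r,r]` and is nonzero at `±r`, then `len = 2r+1`. -/
lemma len_eq_of (M : ℕ) (u : ℤ → ℂ) (r : ℕ) (hrM : r ≤ M)
    (h0 : ∀ k ∈ Iset (2*M+1), (r:ℤ) < |k| → u k = 0)
    (h1 : u r ≠ 0) (h2 : u (-(r:ℤ)) ≠ 0) : len (2*M+1) u = 2 * r + 1 := by
  unfold len
  congr 1
  have hmem : (r:ℤ) ∈ supp (2*M+1) u := by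
    unfold supp
    rw [Finset.mem_filter, Iset_eq, Finset.mem_Icc]
    exact ⟨⟨by omega, by exact_mod_cast hrM⟩, h1⟩
  have hmem' : (-(r:ℤ)) ∈ supp (2*M+1) u := by
    unfold supp
    rw [Finset.mem_filter, Iset_eq, Finset.mem_Icc]
    refine ⟨⟨by simp; exact_mod_cast hrM, by omega⟩, h2⟩
  apply le_antisymm
  · apply Finset.sup_le
    rintro ⟨i, j⟩ hij
    rw [Finset.mem_product] at hij
    obtain ⟨hi, hj⟩ := hij
    unfold supp at hi hj
    rw [Finset.mem_filter] at hi hj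
    have hib : |i| ≤ (r:ℤ) := by
      by_contra hc
      exact hi.2 (h0 i hi.1 (by omega))
    have hjb : |j| ≤ (r:ℤ) := by
      by_contra hc
      exact hj.2 (h0 j hj.1 (by omega))
    rcases abs_cases i with ⟨h,h'⟩|⟨h,h'⟩ <;> rcases abs_cases j with ⟨g,g'⟩|⟨g,g'⟩ <;> omega
  · have : ((r:ℤ), (-(r:ℤ))) ∈ supp (2*M+1) u ×ˢ supp (2*M+1) u :=
      Finset.mem_product.mpr ⟨hmem, hmem'⟩
    calc (2*r+1) - 1 = ((r:ℤ) - (-(r:ℤ))).toNat := by omega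
    _ ≤ _ := Finset.le_sup (f := fun p => (p.1 - p.2).toNat) this

/-- Converse: from `len = 2r+1` plus evenness, support is exactly spread `[-r,r]`. -/
lemma len_conv (M : ℕ) (u : ℤ → ℂ) (r : ℕ)
    (heven : ∀ k ∈ Iset (2*M+1), u (-k) = u k)
    (hne : ∃ k ∈ Iset (2*M+1), u k ≠ 0)
    (hlen : len (2*M+1) u = 2 * r + 1) :
    (r:ℤ) ≤ M ∧ u r ≠ 0 ∧ u (-(r:ℤ)) ≠ 0 ∧
      ∀ k ∈ Iset (2*M+1), (r:ℤ) < |k| → u k = 0 := by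
  classical
  have hS : (supp (2*M+1) u).Nonempty := by
    obtain ⟨k, hk, hk'⟩ := hne
    exact ⟨k, by unfold supp; rw [Finset.mem_filter]; exact ⟨hk, hk'⟩⟩
  set S := supp (2*M+1) u with hSdef
  have hneg : ∀ k ∈ S, -k ∈ S := by
    intro k hk
    rw [hSdef] at hk ⊢
    unfold supp at hk ⊢
    rw [Finset.mem_filter] at hk ⊢
    have hkI : k ∈ Iset (2*M+1) := hk.1
    have hmem : -k ∈ Iset (2*M+1) := by
      rw [Iset_eq] at hkI ⊢
      rw [Finset.mem_Icc] at hkI ⊢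
      omega
    exact ⟨hmem, by rw [heven k hkI]; exact hk.2⟩
  set i := S.max' hS with hi
  set j := S.min' hS with hj
  have hiS : i ∈ S := S.max'_mem hS
  have hjS : j ∈ S := S.min'_mem hS
  have hsup : (S ×ˢ S).sup (fun p => (p.1 - p.2).toNat) = (i - j).toNat := by
    apply le_antisymm
    · apply Finset.sup_le
      rintro ⟨a, b⟩ hab
      rw [Finset.mem_product] at hab
      have ha := S.le_max' a hab.1
      have hb := S.min'_le b hab.2
      omega
    · exact Finset.le_sup (f := fun p => (p.1 - p.2).toNat) (Finset.mem_product (p := (i, j)) |>.mpr ⟨hiS, hjS⟩)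
  unfold len at hlen
  rw [← hSdef, hsup] at hlen
  have hij : i - j = 2 * r := by
    have := S.min'_le i hiS
    omega
  have h1 : j ≤ -i := S.min'_le _ (hneg i hiS)
  have h2 : -j ≤ i := S.le_max' _ (hneg j hjS)
  have hir : i = r := by omega
  have hjr : j = -(r:ℤ) := by omega
  have hiI : i ∈ Iset (2*M+1) := by
    have := hiS; rw [hSdef] at this; unfold supp at this
    exact (Finset.mem_filter.mp this).1
  have hiu : u i ≠ 0 := by
    have := hiS; rw [hSdef] at this; unfold supp at this
    exact (Finset.mem_filter.mp this).2
  have hju : u j ≠ 0 := by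
    have := hjS; rw [hSdef] at this; unfold supp at this
    exact (Finset.mem_filter.mp this).2
  rw [Iset_eq, Finset.mem_Icc] at hiI
  refine ⟨by omega, by rw [← hir]; exact hiu, by rw [← hjr]; exact hju, ?_⟩
  intro k hk hk'
  by_contra hc
  have hkS : k ∈ S := by
    rw [hSdef]; unfold supp; rw [Finset.mem_filter]; exact ⟨hk, hc⟩
  have := S.le_max' k hkS
  have := S.min'_le k hkS
  rcases abs_cases k with ⟨h,h'⟩|⟨h,h'⟩ <;> omega

lemma dft_even (M : ℕ) (u : ℤ → ℂ)
    (heven : ∀ k ∈ Iset (2*M+1), u (-k) = u k) (l : ℤ) :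
    dft (2*M+1) u (-l) = dft (2*M+1) u l := by
  unfold dft
  congr 1
  refine Finset.sum_nbij' (fun k => -k) (fun k => -k) ?_ ?_ ?_ ?_ ?_
  · intro k hk; rw [Iset_eq] at hk ⊢; rw [Finset.mem_Icc] at hk ⊢; omega
  · intro k hk; rw [Iset_eq] at hk ⊢; rw [Finset.mem_Icc] at hk ⊢; omega
  · intro k _; simp
  · intro k _; simp
  · intro k hk
    rw [heven k hk]
    congr 2
    push_cast
    ring

noncomputable def fac (M : ℕ) (j : ℕ) : ℝ[X] :=
  X^2 - C (2 * Real.cos (2 * Real.pi * j / (2*M+1))) * X + 1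

noncomputable def Qr (M m : ℕ) : ℝ[X] := ∏ j ∈ Finset.Icc (M - m + 1) M, fac M j

lemma fac_monic (M j : ℕ) : (fac M j).Monic := by
  unfold fac
  monicity!

lemma Qr_monic (M m : ℕ) : (Qr M m).Monic :=
  Polynomial.monic_prod_of_monic _ _ fun j _ => fac_monic M j

lemma Qr_natDegree (M m : ℕ) (hm : m ≤ M) : (Qr M m).natDegree = 2 * m := by
  unfold Qr
  rw [Polynomial.natDegree_prod _ _ (fun j _ => (fac_monic M j).ne_zero)]
  have : ∀ j ∈ Finset.Icc (M - m + 1) M, (fac M j).natDegree = 2 := by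
    intro j _
    unfold fac
    compute_degree!
  rw [Finset.sum_congr rfl this]
  rw [Finset.sum_const, Nat.card_Icc]
  have : M + 1 - (M - m + 1) = m := by omega
  rw [this]; ring

lemma fac_natDegree (M j : ℕ) : (fac M j).natDegree = 2 := by
  unfold fac; compute_degree!

lemma fac_eq_sum (M j : ℕ) : fac M j = monomial 2 (1:ℝ)
    + monomial 1 (-(2 * Real.cos (2 * Real.pi * j / (2*M+1)))) + monomial 0 1 := by
  unfold fac
  ext n
  simp [Polynomial.coeff_monomial, Polynomial.coeff_X_pow, Polynomial.coeff_one,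
    mul_assoc, Polynomial.coeff_C_mul, Polynomial.coeff_X]
  split_ifs <;> first | (exfalso; omega) | ring

lemma fac_reverse (M j : ℕ) : (fac M j).reverse = fac M j := by
  conv_lhs => rw [Polynomial.reverse, fac_natDegree, fac_eq_sum]
  rw [Polynomial.reflect_add, Polynomial.reflect_add]
  simp only [← Polynomial.C_mul_X_pow_eq_monomial, Polynomial.reflect_C_mul_X_pow]
  rw [fac_eq_sum]
  simp only [← Polynomial.C_mul_X_pow_eq_monomial]
  norm_num [Polynomial.revAt_le]
  ring

lemma Qr_reverse (M m : ℕ) : (Qr M m).reverse = Qr M m := by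
  unfold Qr
  induction (Finset.Icc (M - m + 1) M) using Finset.cons_induction with
  | empty =>
    show Polynomial.reverse (1:ℝ[X]) = 1
    rw [← Polynomial.C_1, Polynomial.reverse_C]
  | cons a s ha ih =>
    rw [Finset.prod_cons, Polynomial.reverse_mul_of_domain, ih, fac_reverse]

lemma Qr_coeff_symm (M m : ℕ) (hm : m ≤ M) (j : ℕ) (hj : j ≤ 2*m) :
    (Qr M m).coeff j = (Qr M m).coeff (2*m - j) := by
  conv_lhs => rw [← Qr_reverse M m]
  rw [Polynomial.coeff_reverse, Qr_natDegree M m hm, Polynomial.revAt_le hj]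

lemma e_mul_e_neg (M : ℕ) (j : ℤ) : e M j * e M (-j) = 1 := by
  unfold e
  rw [← Complex.exp_add]
  rw [show (((-2 * Real.pi * j / (2*M+1) : ℝ) : ℂ) * Complex.I
      + ((-2 * Real.pi * (-j:ℤ) / (2*M+1) : ℝ) : ℂ) * Complex.I) = 0 by push_cast; ring]
  exact Complex.exp_zero

lemma e_add_e_neg (M : ℕ) (j : ℤ) :
    e M j + e M (-j) = ((2 * Real.cos (2 * Real.pi * j / (2*M+1)) : ℝ) : ℂ) := by
  unfold e
  rw [Complex.exp_mul_I, Complex.exp_mul_I]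
  rw [show ((-2 * Real.pi * (-j:ℤ) / (2*M+1) : ℝ) : ℂ)
      = -((-2 * Real.pi * j / (2*M+1) : ℝ) : ℂ) by push_cast; ring]
  rw [Complex.cos_neg, Complex.sin_neg]
  rw [show ((-2 * Real.pi * j / (2*M+1) : ℝ) : ℂ) = -(((2 * Real.pi * j / (2*M+1) : ℝ)) : ℂ) by
    push_cast; ring]
  rw [Complex.cos_neg, ← Complex.ofReal_cos]
  push_cast
  ring

lemma fac_map (M m : ℕ) (j : ℕ) :
    (fac M j).map (algebraMap ℝ ℂ) = (X - C (e M j)) * (X - C (e M (-(j:ℤ)))) := by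
  unfold fac
  rw [Polynomial.map_add, Polynomial.map_sub, Polynomial.map_mul, Polynomial.map_pow,
    Polynomial.map_X, Polynomial.map_C, Polynomial.map_one]
  have h1 : e M (j:ℤ) * e M (-(j:ℤ)) = 1 := e_mul_e_neg M j
  have h2 : e M (j:ℤ) + e M (-(j:ℤ)) = ((2 * Real.cos (2 * Real.pi * j / (2*M+1)) : ℝ) : ℂ) :=
    e_add_e_neg M j
  have : (algebraMap ℝ ℂ) (2 * Real.cos (2 * Real.pi * j / (2*M+1)))
      = ((2 * Real.cos (2 * Real.pi * j / (2*M+1)) : ℝ) : ℂ) := rfl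
  rw [this, ← h2]
  rw [show (1 : ℂ[X]) = C (e M (j:ℤ) * e M (-(j:ℤ))) by rw [h1, map_one]]
  rw [C_add, C_mul]
  ring

lemma Qr_map_eq (M m : ℕ) :
    (Qr M m).map (algebraMap ℝ ℂ) =
      ∏ j ∈ Finset.Icc (M - m + 1) M, ((X - C (e M j)) * (X - C (e M (-(j:ℤ))))) := by
  unfold Qr
  rw [Polynomial.map_prod]
  exact Finset.prod_congr rfl fun j _ => fac_map M m j

lemma e_inj (M : ℕ) {l l' : ℤ} (hl : l ∈ Finset.Icc (-(M:ℤ)) M)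
    (hl' : l' ∈ Finset.Icc (-(M:ℤ)) M)
    (h : e M l = e M l') : l = l' := by
  rw [e, e] at h
  rw [Complex.exp_eq_exp_iff_exists_int] at h
  obtain ⟨n, hn⟩ := h
  have hn' : ((-2 * Real.pi * l / (2*M+1) : ℝ) : ℂ) * Complex.I =
      (((-2 * Real.pi * l' / (2*M+1) + n * (2 * Real.pi)) : ℝ) : ℂ) * Complex.I := by
    rw [hn]; push_cast; ring
  have h3 : (-2 * Real.pi * l / (2*M+1) : ℝ) =
      (-2 * Real.pi * l' / (2*M+1) + n * (2 * Real.pi)) := by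
    exact_mod_cast mul_right_cancel₀ Complex.I_ne_zero hn'
  have hNR : (2*(M:ℝ)+1) ≠ 0 := by positivity
  have h3' : -2 * Real.pi * l = -2 * Real.pi * l' + n * (2 * Real.pi) * (2*M+1) := by
    field_simp at h3
    have h3'' : (-2*Real.pi*(l:ℝ)) * (2*M+1) = (-(2*Real.pi*l') + n*(2*Real.pi)*(2*M+1)) * (2*M+1) := by
      linear_combination (2 * Real.pi * (2*M+1)) * h3
    have := mul_right_cancel₀ hNR h3''
    linarith
  have h4 : 2 * Real.pi * ((l':ℝ) - l) = 2 * Real.pi * ((n:ℝ) * (2*M+1)) := by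
    linarith
  have h5 : ((l' - l : ℤ) : ℝ) = ((n * (2*M+1) : ℤ) : ℝ) := by
    push_cast
    have := mul_left_cancel₀ (by positivity : (2 * Real.pi) ≠ 0) h4
    linarith
  have h6 : l' - l = n * (2*M+1) := by exact_mod_cast h5
  simp only [Finset.mem_Icc] at hl hl'
  have h7 : -(2*(M:ℤ)) ≤ n * (2*M+1) := by omega
  have h8 : n * (2*M+1) ≤ 2*M := by omega
  rcases lt_trichotomy n 0 with hc|hc|hc
  · exfalso; nlinarith
  · rw [hc, zero_mul] at h6; omega
  · exfalso; nlinarith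

noncomputable def Qc (M m : ℕ) : ℂ[X] := (Qr M m).map (algebraMap ℝ ℂ)

lemma Qc_natDegree_le (M m : ℕ) (hm : m ≤ M) : (Qc M m).natDegree ≤ 2 * m := by
  unfold Qc
  exact le_trans Polynomial.natDegree_map_le (le_of_eq (Qr_natDegree M m hm))

lemma Qc_coeff (M m : ℕ) (j : ℕ) : (Qc M m).coeff j = ((Qr M m).coeff j : ℂ) := by
  unfold Qc
  rw [Polynomial.coeff_map]
  rfl

lemma Qr_coeff_top (M m : ℕ) (hm : m ≤ M) : (Qr M m).coeff (2*m) = 1 := by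
  have := (Qr_monic M m)
  rw [← Qr_natDegree M m hm]
  exact this

lemma Qr_coeff_bot (M m : ℕ) (hm : m ≤ M) : (Qr M m).coeff 0 = 1 := by
  rw [Qr_coeff_symm M m hm 0 (by omega)]
  simpa using Qr_coeff_top M m hm

lemma Qr_coeff_high (M m : ℕ) (hm : m ≤ M) (j : ℕ) (hj : 2*m < j) : (Qr M m).coeff j = 0 := by
  apply Polynomial.coeff_eq_zero_of_natDegree_lt
  rw [Qr_natDegree M m hm]; exact hj

/-- The outer frequency set. -/
noncomputable def T (M m : ℕ) : Finset ℤ :=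
  (Finset.Icc (-(M:ℤ)) M).filter (fun l => (M:ℤ) - m < |l|)

lemma T_card (M m : ℕ) (hm : m ≤ M) : (T M m).card = 2 * m := by
  have hT : T M m = Finset.Icc (-(M:ℤ)) (-(M:ℤ)+m-1) ∪ Finset.Icc ((M:ℤ)-m+1) M := by
    ext l
    simp only [T, Finset.mem_filter, Finset.mem_Icc, Finset.mem_union]
    rcases abs_cases l with ⟨h,h'⟩|⟨h,h'⟩ <;> omega
  rw [hT, Finset.card_union_of_disjoint]
  · rw [Int.card_Icc, Int.card_Icc]
    omega
  · rw [Finset.disjoint_left]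
    intro x hx hx'
    rw [Finset.mem_Icc] at hx hx'
    omega

lemma T_subset (M m : ℕ) : T M m ⊆ Finset.Icc (-(M:ℤ)) M := Finset.filter_subset _ _

lemma eval_Qc_eq_zero_iff (M m : ℕ) (hm : m ≤ M) (l : ℤ) (hl : l ∈ Finset.Icc (-(M:ℤ)) M) :
    Polynomial.eval (e M l) (Qc M m) = 0 ↔ (M:ℤ) - m < |l| := by
  unfold Qc
  rw [Qr_map_eq, Polynomial.eval_prod]
  rw [Finset.prod_eq_zero_iff]
  have hmem : ∀ j : ℕ, j ∈ Finset.Icc (M - m + 1) M → ((j:ℤ) ∈ Finset.Icc (-(M:ℤ)) M ∧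
      (-(j:ℤ)) ∈ Finset.Icc (-(M:ℤ)) M) := by
    intro j hj
    rw [Finset.mem_Icc] at hj
    constructor <;> (rw [Finset.mem_Icc]; omega)
  constructor
  · rintro ⟨j, hj, hj0⟩
    rw [Polynomial.eval_mul, Polynomial.eval_sub, Polynomial.eval_sub, Polynomial.eval_X,
      Polynomial.eval_C, Polynomial.eval_C, mul_eq_zero, sub_eq_zero, sub_eq_zero] at hj0
    obtain ⟨h1, h2⟩ := hmem j hj
    rw [Finset.mem_Icc] at hj
    rcases hj0 with h | h
    · have := e_inj M hl h1 h
      rcases abs_cases l with ⟨g,g'⟩|⟨g,g'⟩ <;> omega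
    · have := e_inj M hl h2 h
      rcases abs_cases l with ⟨g,g'⟩|⟨g,g'⟩ <;> omega
  · intro hout
    refine ⟨l.natAbs, ?_, ?_⟩
    · rw [Finset.mem_Icc] at hl ⊢
      rcases abs_cases l with ⟨g,g'⟩|⟨g,g'⟩ <;> omega
    · rw [Polynomial.eval_mul, Polynomial.eval_sub, Polynomial.eval_sub, Polynomial.eval_X,
        Polynomial.eval_C, Polynomial.eval_C, mul_eq_zero, sub_eq_zero, sub_eq_zero]
      rcases abs_cases l with ⟨g,g'⟩|⟨g,g'⟩
      · left; congr 1; omega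
      · right; congr 1; omega

/-- The extremal even vector. -/
noncomputable def aa (M m : ℕ) : ℤ → ℝ :=
  fun k => if -(m:ℤ) ≤ k then (Qr M m).coeff (k + m).toNat else 0

lemma aa_m (M m : ℕ) (hm : m ≤ M) : aa M m m = 1 := by
  unfold aa
  rw [if_pos (by omega)]
  rw [show ((m:ℤ) + m).toNat = 2*m by omega]
  exact Qr_coeff_top M m hm

lemma aa_neg_m (M m : ℕ) (hm : m ≤ M) : aa M m (-(m:ℤ)) = 1 := by
  unfold aa
  rw [if_pos (by omega)]
  rw [show ((-(m:ℤ)) + m).toNat = 0 by omega]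
  exact Qr_coeff_bot M m hm

lemma aa_zero (M m : ℕ) (hm : m ≤ M) (k : ℤ) (hk : (m:ℤ) < |k|) : aa M m k = 0 := by
  unfold aa
  rcases abs_cases k with ⟨h,h'⟩|⟨h,h'⟩
  · rw [if_pos (by omega)]
    exact Qr_coeff_high M m hm _ (by omega)
  · rw [if_neg (by omega)]

lemma aa_even (M m : ℕ) (hm : m ≤ M) (k : ℤ) : aa M m (-k) = aa M m k := by
  rcases le_or_gt (|k|) (m:ℤ) with h | h
  · unfold aa
    rw [if_pos (by rcases abs_cases k with ⟨g,g'⟩|⟨g,g'⟩ <;> omega),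
       if_pos (by rcases abs_cases k with ⟨g,g'⟩|⟨g,g'⟩ <;> omega)]
    rw [show ((-k) + (m:ℤ)).toNat = 2*m - (k + (m:ℤ)).toNat by
      rcases abs_cases k with ⟨g,g'⟩|⟨g,g'⟩ <;> omega]
    exact (Qr_coeff_symm M m hm _ (by rcases abs_cases k with ⟨g,g'⟩|⟨g,g'⟩ <;> omega)).symm
  · rw [aa_zero M m hm _ (by rw [abs_neg]; exact h), aa_zero M m hm _ h]

lemma aa_coeff (M m : ℕ) (j : ℕ) (hj : j ≤ 2*m) :
    (Qc M m).coeff j = ((aa M m ((j:ℤ) - m) : ℝ) : ℂ) := by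
  rw [Qc_coeff]
  unfold aa
  rw [if_pos (by omega), show ((j:ℤ) - m + m).toNat = j by omega]

lemma sqrtN_ne (M : ℕ) : ((Real.sqrt (2*M+1) : ℝ) : ℂ) ≠ 0 := by
  rw [Ne, Complex.ofReal_eq_zero]
  positivity

lemma dft_zero_iff (M m : ℕ) (hm : m ≤ M) (u : ℤ → ℂ)
    (hu : ∀ k ∈ Iset (2*M+1), (m:ℤ) < |k| → u k = 0)
    (Q : ℂ[X]) (hQ : ∀ j : ℕ, j ≤ 2*m → Q.coeff j = u ((j:ℤ) - m))
    (hdeg : Q.natDegree ≤ 2*m) (l : ℤ) :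
    dft (2*M+1) u l = 0 ↔ Q.eval (e M l) = 0 := by
  rw [dft_eq_eval M m hm u hu Q hQ hdeg l, mul_eq_zero, mul_eq_zero]
  have h1 : ¬ ((Real.sqrt (2*M+1) : ℂ)⁻¹ = 0) := by
    rw [inv_eq_zero]; exact sqrtN_ne M
  have h2 : ¬ (e M l ^ (-(m:ℤ)) = 0) := zpow_ne_zero _ (e_ne_zero M l)
  tauto

noncomputable def Pu (m : ℕ) (u : ℤ → ℂ) : ℂ[X] :=
  ∑ i ∈ Finset.range (2*m+1), monomial i (u ((i:ℤ) - m))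

lemma Pu_coeff (m : ℕ) (u : ℤ → ℂ) (j : ℕ) :
    (Pu m u).coeff j = if j ≤ 2*m then u ((j:ℤ) - m) else 0 := by
  unfold Pu
  rw [Polynomial.finset_sum_coeff]
  simp only [Polynomial.coeff_monomial]
  rw [Finset.sum_ite_eq' (Finset.range (2*m+1))]
  simp [Nat.lt_succ_iff]

lemma Pu_natDegree_le (m : ℕ) (u : ℤ → ℂ) : (Pu m u).natDegree ≤ 2*m := by
  unfold Pu
  apply le_trans (Polynomial.natDegree_sum_le _ _)
  rw [Finset.fold_max_le]
  refine ⟨by omega, ?_⟩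
  intro i hi
  rw [Finset.mem_range] at hi
  exact le_trans (Polynomial.natDegree_monomial_le _) (by omega)

lemma poly_unique (M m : ℕ) (hm1 : 1 ≤ m) (hm : m ≤ M) (Q' : ℂ[X])
    (hdeg : Q'.natDegree ≤ 2*m)
    (hz : ∀ l ∈ T M m, Q'.eval (e M l) = 0) :
    Q' = C (Q'.coeff (2*m)) * Qc M m := by
  set R := Q' - C (Q'.coeff (2*m)) * Qc M m with hR
  have hQctop : (Qc M m).coeff (2*m) = 1 := by
    rw [Qc_coeff, Qr_coeff_top M m hm]; norm_num
  have hRdeg : R.natDegree ≤ 2*m := by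
    apply le_trans (Polynomial.natDegree_sub_le _ _)
    rw [max_le_iff]
    exact ⟨hdeg, le_trans (Polynomial.natDegree_C_mul_le _ _) (Qc_natDegree_le M m hm)⟩
  have hRcoeff : R.coeff (2*m) = 0 := by
    rw [hR, Polynomial.coeff_sub, Polynomial.coeff_C_mul, hQctop]
    ring
  have heval : ∀ x ∈ (T M m).image (e M), R.eval x = 0 := by
    intro x hx
    rw [Finset.mem_image] at hx
    obtain ⟨l, hl, rfl⟩ := hx
    rw [hR, Polynomial.eval_sub, Polynomial.eval_mul, Polynomial.eval_C]
    rw [hz l hl, (eval_Qc_eq_zero_iff M m hm l (T_subset M m hl)).mpr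
      (by have := hl; unfold T at this; rw [Finset.mem_filter] at this; exact this.2)]
    ring
  have hcard : ((T M m).image (e M)).card = 2*m := by
    rw [Finset.card_image_of_injOn
      (fun x hx y hy h => e_inj M (T_subset M m hx) (T_subset M m hy) h)]
    exact T_card M m hm
  have hR0 : R = 0 := by
    by_cases h : R = 0
    · exact h
    · have hlt : R.natDegree < 2*m := by
        rcases lt_or_eq_of_le hRdeg with h' | h'
        · exact h'
        · exfalso
          apply h
          apply Polynomial.leadingCoeff_eq_zero.mp
          rw [Polynomial.leadingCoeff, h', hRcoeff]
      exact Polynomial.eq_zero_of_natDegree_lt_card_of_eval_eq_zero' R _ heval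
        (by rw [hcard]; exact hlt)
  have := sub_eq_zero.mp hR0
  linear_combination this

theorem stmt6' (M : ℕ) (hM : 1 ≤ M) (m : ℕ) (hm1 : 1 ≤ m) (hm2 : m ≤ M - 1) :
    ∃ a : ℤ → ℝ, (∃ k ∈ Iset (2 * M + 1), a k ≠ 0) ∧ IsEvenVec (2 * M + 1) a ∧
      len (2 * M + 1) (fun k => (a k : ℂ)) = 2 * m + 1 ∧
      len (2 * M + 1) (dft (2 * M + 1) (fun k => (a k : ℂ))) = 2 * M - 2 * m + 1 ∧
      ∀ a' : ℤ → ℝ, (∃ k ∈ Iset (2 * M + 1), a' k ≠ 0) → IsEvenVec (2 * M + 1) a' →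
        len (2 * M + 1) (fun k => (a' k : ℂ)) = 2 * m + 1 →
        len (2 * M + 1) (dft (2 * M + 1) (fun k => (a' k : ℂ))) = 2 * M - 2 * m + 1 →
        ∃ c : ℝ, c ≠ 0 ∧ ∀ k ∈ Iset (2 * M + 1), a' k = c * a k := by
  have hmM : m < M := by omega
  have hm : m ≤ M := le_of_lt hmM
  set u : ℤ → ℂ := fun k => ((aa M m k : ℝ) : ℂ) with hu_def
  have hu : ∀ k ∈ Iset (2*M+1), (m:ℤ) < |k| → u k = 0 := by
    intro k _ hk
    rw [hu_def]
    simp [aa_zero M m hm k hk]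
  have hQ : ∀ j : ℕ, j ≤ 2*m → (Qc M m).coeff j = u ((j:ℤ) - m) := fun j hj => aa_coeff M m j hj
  have hdeg : (Qc M m).natDegree ≤ 2*m := Qc_natDegree_le M m hm
  refine ⟨aa M m, ⟨(m:ℤ), ?_, ?_⟩, ?_, ?_, ?_, ?_⟩
  · rw [Iset_eq, Finset.mem_Icc]; omega
  · rw [aa_m M m hm]; norm_num
  · intro k _; exact aa_even M m hm k
  · -- len of a
    apply len_eq_of M u m hm hu
    · show u (m:ℤ) ≠ 0
      rw [hu_def]; simp [aa_m M m hm]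
    · show u (-(m:ℤ)) ≠ 0
      rw [hu_def]; simp [aa_neg_m M m hm]
  · -- len of dft
    have h := len_eq_of M (dft (2*M+1) u) (M - m) (by omega) ?_ ?_ ?_
    · rw [h]; omega
    · intro l hl hl'
      rw [dft_zero_iff M m hm u hu (Qc M m) hQ hdeg l]
      rw [eval_Qc_eq_zero_iff M m hm l (by rw [← Iset_eq]; exact hl)]
      push_cast at hl' ⊢
      omega
    · rw [Ne, dft_zero_iff M m hm u hu (Qc M m) hQ hdeg _]
      rw [eval_Qc_eq_zero_iff M m hm _ (by rw [Finset.mem_Icc]; push_cast; omega)]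
      rw [show ((M - m : ℕ) : ℤ) = (M:ℤ) - m from by omega]
      rcases abs_cases ((M:ℤ) - m) with ⟨g,g'⟩|⟨g,g'⟩ <;> omega
    · rw [Ne, dft_zero_iff M m hm u hu (Qc M m) hQ hdeg _]
      rw [eval_Qc_eq_zero_iff M m hm _ (by rw [Finset.mem_Icc]; push_cast; omega)]
      rw [show ((M - m : ℕ) : ℤ) = (M:ℤ) - m from by omega]
      rcases abs_cases (-((M:ℤ) - m)) with ⟨g,g'⟩|⟨g,g'⟩ <;> omega
  · -- uniqueness
    intro a' hne' heven' hlen1' hlen2'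
    set u' : ℤ → ℂ := fun k => ((a' k : ℝ) : ℂ) with hu'_def
    have heven'' : ∀ k ∈ Iset (2*M+1), u' (-k) = u' k := by
      intro k hk
      rw [hu'_def]
      simp only
      rw [heven' k hk]
    obtain ⟨-, hu'm, hu'negm, hzero'⟩ := len_conv M u' m heven''
      (by obtain ⟨k, hk, hk'⟩ := hne'; exact ⟨k, hk, by simpa [hu'_def] using hk'⟩) hlen1'
    have hQ' : ∀ j : ℕ, j ≤ 2*m → (Pu m u').coeff j = u' ((j:ℤ) - m) := by
      intro j hj
      rw [Pu_coeff, if_pos hj]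
    have hdeg' : (Pu m u').natDegree ≤ 2*m := Pu_natDegree_le m u'
    have hveven : ∀ l ∈ Iset (2*M+1), dft (2*M+1) u' (-l) = dft (2*M+1) u' l :=
      fun l _ => dft_even M u' heven'' l
    have hnev : ∃ k ∈ Iset (2*M+1), dft (2*M+1) u' k ≠ 0 := by
      have hne2 : 2*M - 2*m + 1 ≠ 1 := by omega
      by_contra hcon
      push_neg at hcon
      have hempty : supp (2*M+1) (dft (2*M+1) u') = ∅ := by
        rw [Finset.eq_empty_iff_forall_notMem]
        intro x hx
        unfold supp at hx
        rw [Finset.mem_filter] at hx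
        exact hx.2 (hcon x hx.1)
      unfold len at hlen2'
      rw [hempty] at hlen2'
      simp at hlen2'
      omega
    have hlenv : len (2*M+1) (dft (2*M+1) u') = 2*(M - m)+1 := by rw [hlen2']; omega
    obtain ⟨-, -, -, hvzero⟩ := len_conv M (dft (2*M+1) u') (M - m) hveven hnev hlenv
    · -- now know dft vanishes outside [-(M-m), M-m]
      have hz : ∀ l ∈ T M m, (Pu m u').eval (e M l) = 0 := by
        intro l hl
        have hlI : l ∈ Iset (2*M+1) := by rw [Iset_eq]; exact T_subset M m hl
        have houter : (M:ℤ) - m < |l| := by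
          have := hl; unfold T at this; rw [Finset.mem_filter] at this; exact this.2
        have := hvzero l hlI (by rw [show ((M - m : ℕ) : ℤ) = (M:ℤ) - m from by omega]; exact houter)
        rw [dft_zero_iff M m hm u' hzero' (Pu m u') hQ' hdeg' l] at this
        exact this
      have hfact := poly_unique M m hm1 hm (Pu m u') hdeg' hz
      have hctop : (Pu m u').coeff (2*m) = ((a' (m:ℤ) : ℝ) : ℂ) := by
        rw [Pu_coeff, if_pos (le_refl _)]
        rw [hu'_def]
        norm_num
        congr 1
        push_cast
        ring
      refine ⟨a' (m:ℤ), ?_, ?_⟩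
      · intro hcon
        apply hu'm
        rw [hu'_def]
        simp [hcon]
      · intro k hkI
        rcases le_or_gt (|k|) (m:ℤ) with hk | hk
        · have hj : ((k + (m:ℤ)).toNat) ≤ 2*m := by
            rcases abs_cases k with ⟨g,g'⟩|⟨g,g'⟩ <;> omega
          have hcoeff := congrArg (fun p => Polynomial.coeff p ((k + (m:ℤ)).toNat)) hfact
          simp only [Polynomial.coeff_C_mul] at hcoeff
          rw [Pu_coeff, if_pos hj, hctop] at hcoeff
          rw [aa_coeff M m _ hj] at hcoeff
          rw [show (((k + (m:ℤ)).toNat : ℤ) - m) = k by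
            rcases abs_cases k with ⟨g,g'⟩|⟨g,g'⟩ <;> omega] at hcoeff
          rw [hu'_def] at hcoeff
          simp only at hcoeff
          exact_mod_cast hcoeff
        · have h1 : a' k = 0 := by
            have h2 : ((a' k : ℝ) : ℂ) = 0 := hzero' k hkI hk
            exact_mod_cast h2
          rw [h1, aa_zero M m hm k hk, mul_zero]

end Stmt6

theorem stmt6 (M : ℕ) (hM : 1 ≤ M) (m : ℕ) (hm1 : 1 ≤ m) (hm2 : m ≤ M - 1) :
    ∃ a : ℤ → ℝ, (∃ k ∈ Iset (2 * M + 1), a k ≠ 0) ∧ IsEvenVec (2 * M + 1) a ∧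
      len (2 * M + 1) (fun k => (a k : ℂ)) = 2 * m + 1 ∧
      len (2 * M + 1) (dft (2 * M + 1) (fun k => (a k : ℂ))) = 2 * M - 2 * m + 1 ∧
      ∀ a' : ℤ → ℝ, (∃ k ∈ Iset (2 * M + 1), a' k ≠ 0) → IsEvenVec (2 * M + 1) a' →
        len (2 * M + 1) (fun k => (a' k : ℂ)) = 2 * m + 1 →
        len (2 * M + 1) (dft (2 * M + 1) (fun k => (a' k : ℂ))) = 2 * M - 2 * m + 1 →
        ∃ c : ℝ, c ≠ 0 ∧ ∀ k ∈ Iset (2 * M + 1), a' k = c * a k := by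
  exact Stmt6.stmt6' M hM m hm1 hm2
end

section
/- Let N = 2M+1. If a ∈ ℝ^N is a nonzero odd vector, then the signal lengths satisfy L(a) + L(Fa) ≥ N + 3, where F is the centered DFT. -/
open scoped Real BigOperators

/-- A vector is odd if `a(-k) = -a(k)` for all `k ∈ I_N` (here `N` odd, `I_N = {-M,…,M}`). -/
def IsOddVec (N : ℕ) (a : ℤ → ℝ) : Prop := ∀ k ∈ Iset N, a (-k) = - a k

lemma Iset_eq (M : ℕ) : Iset (2 * M + 1) = Finset.Icc (-(M : ℤ)) (M : ℤ) := by
  unfold Iset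
  have h : ((2 * M + 1 + 1) / 2 : ℕ) = M + 1 := by omega
  rw [h]
  congr 1 <;> push_cast <;> ring

lemma card_Iset (M : ℕ) : (Iset (2 * M + 1)).card = 2 * M + 1 := by
  rw [Iset_eq, Int.card_Icc]
  omega

lemma symm_bound (S : Finset ℤ) (hne : S.Nonempty) (h0 : (0:ℤ) ∉ S)
    (hsymm : ∀ k ∈ S, -k ∈ S) :
    1 ≤ S.max' hne ∧ (∀ k ∈ S, -S.max' hne ≤ k ∧ k ≤ S.max' hne) ∧
      S.card ≤ (2 * S.max' hne).toNat := by
  set m := S.max' hne with hm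
  have hbound : ∀ k ∈ S, -m ≤ k ∧ k ≤ m := by
    intro k hk
    refine ⟨?_, S.le_max' k hk⟩
    have := S.le_max' (-k) (hsymm k hk)
    omega
  have hmem : m ∈ S := S.max'_mem hne
  have hm1 : 1 ≤ m := by
    have h1 := (hbound (-m) (hsymm m hmem)).2
    have : m ≠ 0 := fun h => h0 (h ▸ hmem)
    omega
  refine ⟨hm1, hbound, ?_⟩
  have hsub : S ⊆ (Finset.Icc (-m) m).erase 0 := by
    intro k hk
    rw [Finset.mem_erase, Finset.mem_Icc]
    exact ⟨fun h => h0 (h ▸ hk), hbound k hk⟩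
  calc S.card ≤ ((Finset.Icc (-m) m).erase 0).card := Finset.card_le_card hsub
    _ = (Finset.Icc (-m) m).card - 1 := Finset.card_erase_of_mem (by
        rw [Finset.mem_Icc]; omega)
    _ = (2 * m).toNat := by rw [Int.card_Icc]; omega

lemma dft_odd (M : ℕ) (v : ℤ → ℂ) (hv : ∀ k ∈ Iset (2*M+1), v (-k) = -v k) (l : ℤ) :
    dft (2*M+1) v (-l) = - dft (2*M+1) v l := by
  unfold dft
  rw [← mul_neg, ← Finset.sum_neg_distrib]
  congr 1
  refine Finset.sum_equiv (Equiv.neg ℤ) ?_ ?_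
  · intro k; simp [Iset_eq, Finset.mem_Icc]; omega
  · intro k hk
    simp only [Equiv.neg_apply]
    rw [hv k hk]
    push_cast
    ring_nf

lemma card_zeros (M : ℕ) (v : ℤ → ℂ) (m : ℤ) (hm : 1 ≤ m) (hmM : m ≤ (M : ℤ))
    (hout : ∀ k ∈ Iset (2*M+1), (k < -m ∨ m < k) → v k = 0) (hvm : v m ≠ 0) :
    ((Iset (2*M+1)).filter (fun l => dft (2*M+1) v l = 0)).card ≤ (2*m).toNat := by
  classical
  set N : ℕ := 2*M+1 with hN
  set Q : Polynomial ℂ :=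
    ∑ k ∈ Finset.Icc (-m) m, Polynomial.C (v k) * Polynomial.X ^ (m + k).toNat with hQ
  -- Q is nonzero
  have hcoeff : Q.coeff (m + m).toNat = v m := by
    rw [hQ, Polynomial.finset_sum_coeff]
    rw [Finset.sum_eq_single m]
    · simp [Polynomial.coeff_C_mul, Polynomial.coeff_X_pow]
    · intro k hk hkm
      rw [Finset.mem_Icc] at hk
      rw [Polynomial.coeff_C_mul, Polynomial.coeff_X_pow, if_neg (by omega), mul_zero]
    · intro h
      exact absurd (Finset.mem_Icc.mpr ⟨by omega, le_refl m⟩) h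
  have hQne : Q ≠ 0 := fun h => hvm (by rw [← hcoeff, h, Polynomial.coeff_zero])
  -- degree bound
  have hdeg : Q.natDegree ≤ (2*m).toNat := by
    rw [hQ]
    apply Polynomial.natDegree_sum_le_of_forall_le
    intro k hk
    rw [Finset.mem_Icc] at hk
    exact le_trans (Polynomial.natDegree_C_mul_X_pow_le _ _) (by omega)
  -- the root of unity
  set w : ℂ := Complex.exp (-(2 * Real.pi * Complex.I) / N) with hw
  have hwne : w ≠ 0 := Complex.exp_ne_zero _
  have hNne : (N:ℂ) ≠ 0 := Nat.cast_ne_zero.mpr (by omega)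
  have hprim : IsPrimitiveRoot w N := by
    have h1 := (Complex.isPrimitiveRoot_exp N (by omega)).inv
    rw [← Complex.exp_neg] at h1
    rw [hw, show -(2 * (Real.pi:ℂ) * Complex.I) / N = -(2 * Real.pi * Complex.I / N) by ring]
    exact h1
  -- evaluation identity
  have hsqrt : ((Real.sqrt N : ℝ) : ℂ)⁻¹ ≠ 0 := by
    apply inv_ne_zero
    simp only [ne_eq, Complex.ofReal_eq_zero]
    positivity
  have hval : ∀ l : ℤ, dft N v l
      = (Real.sqrt N : ℂ)⁻¹ * ((w ^ l) ^ (-m) * Q.eval (w ^ l)) := by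
    intro l
    unfold dft
    congr 1
    have hzne : w ^ l ≠ 0 := zpow_ne_zero _ hwne
    have hsub : Finset.Icc (-m) m ⊆ Iset N := by
      rw [hN, Iset_eq]
      apply Finset.Icc_subset_Icc <;> omega
    rw [← Finset.sum_subset hsub (by
      intro k hk hk2
      rw [hN, Iset_eq, Finset.mem_Icc] at hk
      rw [Finset.mem_Icc] at hk2
      rw [hout k (by rw [hN, Iset_eq, Finset.mem_Icc]; omega) (by omega), mul_zero])]
    rw [Polynomial.eval_finset_sum, Finset.mul_sum]
    apply Finset.sum_congr rfl
    intro k hk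
    rw [Finset.mem_Icc] at hk
    have hexp : Complex.exp (-2 * Real.pi * Complex.I * k * l / N) = (w ^ l) ^ (k : ℤ) := by
      rw [← zpow_mul, mul_comm (l:ℤ) k]
      rw [show (-2 * (Real.pi:ℂ) * Complex.I * k * l / N)
          = ((k * l : ℤ) : ℂ) * (-(2 * Real.pi * Complex.I) / N) by push_cast; ring]
      rw [Complex.exp_int_mul]
    have hpow : (w ^ l) ^ (k:ℤ) = (w ^ l) ^ (-m) * (w ^ l) ^ (m + k).toNat := by
      rw [← zpow_natCast (w ^ l) (m + k).toNat, ← zpow_add₀ hzne]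
      congr 1
      omega
    rw [hexp, hpow]
    simp only [Polynomial.eval_mul, Polynomial.eval_C, Polynomial.eval_pow, Polynomial.eval_X]
    ring
  -- injectivity of l ↦ w ^ l on Iset
  have hinj : Set.InjOn (fun l : ℤ => w ^ l) ↑(Iset N) := by
    intro l hl l' hl' he
    simp only at he
    have h1 : w ^ (l - l') = 1 := by
      rw [zpow_sub₀ hwne, he, div_self (zpow_ne_zero _ hwne)]
    have hdvd : ((N:ℕ) : ℤ) ∣ (l - l') := (hprim.zpow_eq_one_iff_dvd _).mp h1
    rw [hN, Iset_eq] at hl hl'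
    simp only [Finset.coe_Icc, Set.mem_Icc] at hl hl'
    obtain ⟨c, hc⟩ := hdvd
    rw [show ((N:ℕ):ℤ) = 2*(M:ℤ)+1 by rw [hN]; push_cast; ring] at hc
    have hc0 : c = 0 := by
      rcases lt_trichotomy c 0 with h | h | h
      · have h2 := mul_le_mul_of_nonneg_left (show c ≤ -1 by omega)
          (show (0:ℤ) ≤ 2*(M:ℤ)+1 by positivity)
        linarith [hl.1, hl'.2]
      · exact h
      · have h2 := mul_le_mul_of_nonneg_left (show 1 ≤ c by omega)
          (show (0:ℤ) ≤ 2*(M:ℤ)+1 by positivity)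
        linarith [hl.2, hl'.1]
    rw [hc0, mul_zero] at hc
    omega
  -- zeros inject into roots of Q
  set Z := (Iset N).filter (fun l => dft N v l = 0) with hZ
  have himg : Z.image (fun l : ℤ => w ^ l) ⊆ Q.roots.toFinset := by
    intro x hx
    rw [Finset.mem_image] at hx
    obtain ⟨l, hl, rfl⟩ := hx
    rw [hZ, Finset.mem_filter] at hl
    have h0 := hl.2
    rw [hval l] at h0
    have : Q.eval (w ^ l) = 0 := by
      rcases mul_eq_zero.mp h0 with h | h
      · exact absurd h hsqrt
      · rcases mul_eq_zero.mp h with h | h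
        · exact absurd h (zpow_ne_zero _ (zpow_ne_zero _ hwne))
        · exact h
    rw [Multiset.mem_toFinset, Polynomial.mem_roots hQne]
    exact this
  calc Z.card = (Z.image (fun l : ℤ => w ^ l)).card := by
        rw [Finset.card_image_of_injOn (hinj.mono (by
          exact_mod_cast Finset.coe_subset.mpr (Finset.filter_subset _ _)))]
    _ ≤ Q.roots.toFinset.card := Finset.card_le_card himg
    _ ≤ Multiset.card Q.roots := Multiset.toFinset_card_le _
    _ ≤ Q.natDegree := Polynomial.card_roots' Q
    _ ≤ (2*m).toNat := hdeg

lemma mem_supp {N : ℕ} {v : ℤ → ℂ} {k : ℤ} : k ∈ supp N v ↔ k ∈ Iset N ∧ v k ≠ 0 := by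
  simp [supp]

theorem stmt7 (M : ℕ) (hM : 1 ≤ M) (a : ℤ → ℝ)
    (ha : ∃ k ∈ Iset (2 * M + 1), a k ≠ 0) (hodd : IsOddVec (2 * M + 1) a) :
    (2 * M + 1) + 3 ≤ len (2 * M + 1) (fun k => (a k : ℂ)) +
      len (2 * M + 1) (dft (2 * M + 1) (fun k => (a k : ℂ))) := by
  classical
  set u : ℤ → ℂ := fun k => (a k : ℂ) with hu
  set N : ℕ := 2 * M + 1 with hN
  have hu_odd : ∀ k ∈ Iset N, u (-k) = -u k := by
    intro k hk
    simp only [hu]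
    rw [hodd k hk]
    push_cast
    ring
  set b : ℤ → ℂ := dft N u with hb
  have hb_odd : ∀ l : ℤ, b (-l) = -b l := dft_odd M u hu_odd
  -- support of u
  obtain ⟨k0, hk0, hak0⟩ := ha
  have hSne : (supp N u).Nonempty :=
    ⟨k0, Finset.mem_filter.mpr ⟨hk0, by simp [hu, hak0]⟩⟩
  have h0mem : (0:ℤ) ∈ Iset N := by rw [hN, Iset_eq]; simp
  have hS0 : (0:ℤ) ∉ supp N u := by
    intro h
    have h2 := hu_odd 0 h0mem
    rw [neg_zero] at h2
    exact (mem_supp.mp h).2 (by linear_combination h2 / 2)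
  have hSsymm : ∀ k ∈ supp N u, -k ∈ supp N u := by
    intro k hk
    rw [mem_supp] at hk ⊢
    refine ⟨?_, ?_⟩
    · have hk1 := hk.1
      rw [hN, Iset_eq, Finset.mem_Icc] at hk1 ⊢
      omega
    · rw [hu_odd k hk.1]
      simpa using hk.2
  obtain ⟨hm1, hbound, hcard⟩ := symm_bound _ hSne hS0 hSsymm
  set m : ℤ := (supp N u).max' hSne with hm
  have hmmem : m ∈ supp N u := (supp N u).max'_mem hSne
  have hmM : m ≤ (M : ℤ) := by
    have := (Finset.mem_filter.mp hmmem).1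
    rw [hN, Iset_eq, Finset.mem_Icc] at this
    exact this.2
  -- zeros of the DFT
  have hcardZ := card_zeros M u m hm1 hmM (by
    intro k hk hk2
    by_contra hne
    have : k ∈ supp N u := mem_supp.mpr ⟨hk, hne⟩
    have := hbound k this
    omega) (mem_supp.mp hmmem).2
  set Z := (Iset N).filter (fun l => dft N u l = 0) with hZ
  have hsupp_eq : supp N b = (Iset N).filter (fun l => ¬ dft N u l = 0) := by
    ext l
    simp [supp, hb]
  have hcards : Z.card + (supp N b).card = N := by
    have h := Finset.card_filter_add_card_filter_not
      (s := Iset N) (p := fun l => dft N u l = 0)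
    rw [hsupp_eq, hZ, hN]
    rw [hN, card_Iset M] at h
    exact h
  -- support of b
  have hTne : (supp N b).Nonempty := by
    rw [← Finset.card_pos]
    have : (2*m).toNat ≤ 2*M := by omega
    omega
  have hT0 : (0:ℤ) ∉ supp N b := by
    intro h
    have h2 := hb_odd 0
    rw [neg_zero] at h2
    exact (mem_supp.mp h).2 (by linear_combination h2 / 2)
  have hTsymm : ∀ k ∈ supp N b, -k ∈ supp N b := by
    intro k hk
    rw [mem_supp] at hk ⊢
    refine ⟨?_, ?_⟩
    · have hk1 := hk.1
      rw [hN, Iset_eq, Finset.mem_Icc] at hk1 ⊢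
      omega
    · rw [hb_odd k]
      simpa using hk.2
  obtain ⟨hm1', hbound', hcard'⟩ := symm_bound _ hTne hT0 hTsymm
  set m' : ℤ := (supp N b).max' hTne with hm'
  have hmmem' : m' ∈ supp N b := (supp N b).max'_mem hTne
  -- length lower bounds
  have hlen_a : 2 * m.toNat + 1 ≤ len N u := by
    have hmem : (m, -m) ∈ supp N u ×ˢ supp N u :=
      Finset.mem_product.mpr ⟨hmmem, hSsymm _ hmmem⟩
    have h2 := Finset.le_sup (f := fun p : ℤ × ℤ => (p.1 - p.2).toNat) hmem
    unfold len
    simp only at h2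
    omega
  have hlen_b : 2 * m'.toNat + 1 ≤ len N b := by
    have hmem : (m', -m') ∈ supp N b ×ˢ supp N b :=
      Finset.mem_product.mpr ⟨hmmem', hTsymm _ hmmem'⟩
    have h2 := Finset.le_sup (f := fun p : ℤ × ℤ => (p.1 - p.2).toNat) hmem
    unfold len
    simp only at h2
    omega
  omega
end
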